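/- The 2-OV graph H(U,v,a) is connected, and the vertex s is a center of H(U,v,a): for every vertex y of H(U,v,a), the eccentricity of s is at most the eccentricity of y (so the eccentricity of s equals the radius of H(U,v,a)). -/

import Mathlib

/-!
The 2-OV graph `H(U,v,a)` (Theorem 3.4 construction) is connected and the vertex `s`
is a center: the eccentricity of `s` is at most the eccentricity of any vertex.
-/

namespace OVConstr

variable {B P : Type*}

/-- Vertices of a graph assembled from base vertices `B` and, for each path request
`p : P` of length `L p`, the `L p - 1` internal vertices of the path. -/
abbrev Vert (B P : Type*) (L : P → ℕ) : Type _ := B ⊕ (Σ p : P, Fin (L p - 1))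

/-- `pos e0 e1 L p i z` : `z` is the `i`-th vertex along the path `p`
(whose endpoints are `e0 p` and `e1 p` and whose length is `L p`). -/
def pos (e0 e1 : P → B) (L : P → ℕ) (p : P) (i : ℕ) (z : Vert B P L) : Prop :=
  (i = 0 ∧ z = Sum.inl (e0 p)) ∨ (i = L p ∧ z = Sum.inl (e1 p)) ∨
    (∃ h : i - 1 < L p - 1, 0 < i ∧ i < L p ∧ z = Sum.inr ⟨p, ⟨i - 1, h⟩⟩)

/-- The graph obtained from the base vertex set `B` by adding, for each `p : P`, an
internally vertex-disjoint path of length `L p` between the vertices `e0 p` and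
`e1 p` (for `L p = 1` this is just an edge). -/
def pathGraph (e0 e1 : P → B) (L : P → ℕ) : SimpleGraph (Vert B P L) where
  Adj x y := x ≠ y ∧ ∃ p i, i < L p ∧
    ((pos e0 e1 L p i x ∧ pos e0 e1 L p (i + 1) y) ∨
     (pos e0 e1 L p i y ∧ pos e0 e1 L p (i + 1) x))
  symm := by
    constructor
    rintro x y ⟨hne, p, i, hi, h⟩
    exact ⟨hne.symm, p, i, hi, h.symm⟩
  loopless := ⟨fun x h => h.1 rfl⟩

/-- Base (named) vertices of the 2-OV graph `H(U,v,a)`. -/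
inductive Base (ℓ : ℕ) (U : Set (Fin ℓ → Bool)) : Type
  | s
  | cL (c : Fin ℓ)
  | cR (c : Fin ℓ)
  | uL0 (u : U)
  | uLa (u : U)
  | uR0 (u : U)
  | uRa (u : U)

/-- Path requests of the 2-OV graph `H(U,v,a)`. -/
inductive Pth (ℓ : ℕ) (U : Set (Fin ℓ → Bool)) (v : Fin ℓ → Bool) : Type
  | scL (c : Fin ℓ)                                    -- s — c_left, length 2a
  | scR (c : Fin ℓ)                                    -- s — c_right, length 2a
  | uLpath (u : U)                                     -- u_left^0 … u_left^a, length a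
  | uRpath (u : U)                                     -- u_right^0 … u_right^a, length a
  | ucL (u : U) (c : Fin ℓ) (h : u.1 c = true)         -- u_left^a — c_left, length a
  | ucR (u : U) (c : Fin ℓ) (h : u.1 c = true)         -- u_right^a — c_right, length a
  | vcL (c : Fin ℓ) (h : v c = true)                   -- edge s — c_left
  | vcR (c : Fin ℓ) (h : v c = true)                   -- edge s — c_right

variable {ℓ : ℕ} {U : Set (Fin ℓ → Bool)} {v : Fin ℓ → Bool}

/-- First endpoint of each path request. -/
def e0 : Pth ℓ U v → Base ℓ U
  | .scL _ => .s
  | .scR _ => .s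
  | .uLpath u => .uL0 u
  | .uRpath u => .uR0 u
  | .ucL u _ _ => .uLa u
  | .ucR u _ _ => .uRa u
  | .vcL _ _ => .s
  | .vcR _ _ => .s

/-- Second endpoint of each path request. -/
def e1 : Pth ℓ U v → Base ℓ U
  | .scL c => .cL c
  | .scR c => .cR c
  | .uLpath u => .uLa u
  | .uRpath u => .uRa u
  | .ucL _ c _ => .cL c
  | .ucR _ c _ => .cR c
  | .vcL c _ => .cL c
  | .vcR c _ => .cR c

/-- Length of each path request: the `s — c_left`/`s — c_right` paths have length
`2a`, the `v`-edges have length `1`, all other paths have length `a`. -/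
def len (a : ℕ) : Pth ℓ U v → ℕ
  | .scL _ => 2 * a
  | .scR _ => 2 * a
  | .vcL _ _ => 1
  | .vcR _ _ => 1
  | _ => a

/-- The 2-OV graph `H(U,v,a)`. -/
def H (a ℓ : ℕ) (U : Set (Fin ℓ → Bool)) (v : Fin ℓ → Bool) :
    SimpleGraph (Vert (Base ℓ U) (Pth ℓ U v) (len a)) :=
  pathGraph e0 e1 (len a)

/-- The eccentricity (in `ℕ∞`) of a vertex `z`: the supremum of the distances from
`z` to all vertices. -/
noncomputable def ecc (a ℓ : ℕ) (U : Set (Fin ℓ → Bool)) (v : Fin ℓ → Bool)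
    (z : Vert (Base ℓ U) (Pth ℓ U v) (len a)) : ℕ∞ :=
  ⨆ y, (H a ℓ U v).edist z y

/-! ### Auxiliary development for the proof -/

variable {a : ℕ}

/-- Mirror map on base vertices, swapping left and right. -/
def mB : Base ℓ U → Base ℓ U
  | .s => .s
  | .cL c => .cR c
  | .cR c => .cL c
  | .uL0 u => .uR0 u
  | .uR0 u => .uL0 u
  | .uLa u => .uRa u
  | .uRa u => .uLa u

/-- Mirror map on path requests. -/
def mP : Pth ℓ U v → Pth ℓ U v
  | .scL c => .scR c
  | .scR c => .scL c
  | .uLpath u => .uRpath u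
  | .uRpath u => .uLpath u
  | .ucL u c h => .ucR u c h
  | .ucR u c h => .ucL u c h
  | .vcL c h => .vcR c h
  | .vcR c h => .vcL c h

lemma len_mP (p : Pth ℓ U v) : len a (mP p) = len a p := by cases p <;> rfl
lemma e0_mP (p : Pth ℓ U v) : e0 (mP p) = mB (e0 p) := by cases p <;> rfl
lemma e1_mP (p : Pth ℓ U v) : e1 (mP p) = mB (e1 p) := by cases p <;> rfl
lemma mB_mB (b : Base ℓ U) : mB (mB b) = b := by cases b <;> rfl
lemma mP_mP (p : Pth ℓ U v) : mP (mP p) = p := by cases p <;> rfl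

/-- Mirror map on vertices of `H(U,v,a)`. -/
def mV : Vert (Base ℓ U) (Pth ℓ U v) (len a) → Vert (Base ℓ U) (Pth ℓ U v) (len a)
  | Sum.inl b => Sum.inl (mB b)
  | Sum.inr ⟨p, i⟩ => Sum.inr ⟨mP p, Fin.cast (by rw [len_mP]) i⟩

lemma mV_mV (z : Vert (Base ℓ U) (Pth ℓ U v) (len a)) : mV (mV z) = z := by
  cases z with
  | inl b => simp [mV, mB_mB]
  | inr pi =>
    obtain ⟨p, i⟩ := pi
    show Sum.inr _ = Sum.inr _
    exact congrArg Sum.inr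
      (Sigma.ext (mP_mP p) ((Fin.heq_ext_iff (by rw [len_mP, len_mP])).mpr rfl))

lemma pos_mP {p : Pth ℓ U v} {i : ℕ} {z} (h : pos e0 e1 (len a) p i z) :
    pos e0 e1 (len a) (mP p) i (mV z) := by
  rcases h with ⟨h0, rfl⟩ | ⟨hl, rfl⟩ | ⟨hb, h1, h2, rfl⟩
  · exact Or.inl ⟨h0, by simp [mV, e0_mP]⟩
  · exact Or.inr (Or.inl ⟨by rw [len_mP, hl], by simp [mV, e1_mP]⟩)
  · exact Or.inr (Or.inr ⟨by rw [len_mP]; exact hb, h1, by rw [len_mP]; exact h2, rfl⟩)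

lemma adj_mV {x y : Vert (Base ℓ U) (Pth ℓ U v) (len a)}
    (h : (H a ℓ U v).Adj x y) : (H a ℓ U v).Adj (mV x) (mV y) := by
  obtain ⟨hne, p, i, hi, h⟩ := h
  refine ⟨fun hc => hne (by rw [← mV_mV x, hc, mV_mV]), mP p, i, by rw [len_mP]; exact hi, ?_⟩
  rcases h with ⟨h1, h2⟩ | ⟨h1, h2⟩
  · exact Or.inl ⟨pos_mP h1, pos_mP h2⟩
  · exact Or.inr ⟨pos_mP h1, pos_mP h2⟩

/-- The mirror map as a graph homomorphism. -/
def mHom (a : ℕ) (ℓ : ℕ) (U : Set (Fin ℓ → Bool)) (v : Fin ℓ → Bool) :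
    H a ℓ U v →g H a ℓ U v := ⟨mV, adj_mV⟩

lemma edist_mV (x y : Vert (Base ℓ U) (Pth ℓ U v) (len a)) :
    (H a ℓ U v).edist (mV x) (mV y) = (H a ℓ U v).edist x y := by
  have key : ∀ x y : Vert (Base ℓ U) (Pth ℓ U v) (len a),
      (H a ℓ U v).edist x y ≤ (H a ℓ U v).edist (mV x) (mV y) := by
    intro x y
    by_cases hr : (H a ℓ U v).Reachable (mV x) (mV y)
    · obtain ⟨w, hw⟩ := hr.exists_walk_length_eq_edist
      have := SimpleGraph.edist_le ((w.map (mHom a ℓ U v)).copy (show (mHom a ℓ U v) (mV x) = x from mV_mV x)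
        (show (mHom a ℓ U v) (mV y) = y from mV_mV y))
      rwa [SimpleGraph.Walk.length_copy, SimpleGraph.Walk.length_map, hw] at this
    · rw [SimpleGraph.edist_eq_top_of_not_reachable hr]; exact le_top
  refine le_antisymm ?_ (key x y)
  have := key (mV x) (mV y)
  rwa [mV_mV, mV_mV] at this

lemma ecc_mV (z : Vert (Base ℓ U) (Pth ℓ U v) (len a)) :
    ecc a ℓ U v (mV z) = ecc a ℓ U v z := by
  unfold ecc
  refine le_antisymm (iSup_le fun y => ?_) (iSup_le fun y => ?_)
  · have h : (H a ℓ U v).edist (mV z) y = (H a ℓ U v).edist z (mV y) := by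
      conv_lhs => rw [← mV_mV y]
      exact edist_mV z (mV y)
    rw [h]
    exact le_iSup (fun w => (H a ℓ U v).edist z w) (mV y)
  · rw [← edist_mV z y]
    exact le_iSup (fun w => (H a ℓ U v).edist (mV z) w) (mV y)

/-- Left base vertices. -/
def baseL : Base ℓ U → Prop
  | .cL _ => True | .uL0 _ => True | .uLa _ => True | _ => False

/-- Right base vertices. -/
def baseR : Base ℓ U → Prop
  | .cR _ => True | .uR0 _ => True | .uRa _ => True | _ => False

/-- Left path requests. -/
def pthL : Pth ℓ U v → Prop
  | .scL _ => True | .uLpath _ => True | .ucL _ _ _ => True | .vcL _ _ => True | _ => False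

/-- Right path requests. -/
def pthR : Pth ℓ U v → Prop
  | .scR _ => True | .uRpath _ => True | .ucR _ _ _ => True | .vcR _ _ => True | _ => False

/-- Left vertices of `H`. -/
def isL : Vert (Base ℓ U) (Pth ℓ U v) (len a) → Prop
  | Sum.inl b => baseL b
  | Sum.inr ⟨p, _⟩ => pthL p

/-- Right vertices of `H`. -/
def isR : Vert (Base ℓ U) (Pth ℓ U v) (len a) → Prop
  | Sum.inl b => baseR b
  | Sum.inr ⟨p, _⟩ => pthR p

lemma tri (z : Vert (Base ℓ U) (Pth ℓ U v) (len a)) :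
    z = Sum.inl Base.s ∨ isL z ∨ isR z := by
  cases z with
  | inl b => cases b <;> simp [isL, isR, baseL, baseR]
  | inr pi => obtain ⟨p, i⟩ := pi; cases p <;> simp [isL, isR, pthL, pthR]

lemma isL_not_isR {z : Vert (Base ℓ U) (Pth ℓ U v) (len a)} (h : isL z) : ¬ isR z := by
  cases z with
  | inl b => cases b <;> simp_all [isL, isR, baseL, baseR]
  | inr pi => obtain ⟨p, i⟩ := pi; cases p <;> simp_all [isL, isR, pthL, pthR]

lemma isR_mV {z : Vert (Base ℓ U) (Pth ℓ U v) (len a)} (h : isL z) : isR (mV z) := by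
  cases z with
  | inl b => cases b <;> simp_all [isL, isR, baseL, baseR, mV, mB]
  | inr pi => obtain ⟨p, i⟩ := pi; cases p <;> simp_all [isL, isR, pthL, pthR, mV, mP]

lemma isL_mV {z : Vert (Base ℓ U) (Pth ℓ U v) (len a)} (h : isR z) : isL (mV z) := by
  cases z with
  | inl b => cases b <;> simp_all [isL, isR, baseL, baseR, mV, mB]
  | inr pi => obtain ⟨p, i⟩ := pi; cases p <;> simp_all [isL, isR, pthL, pthR, mV, mP]

lemma endpoint_L {p : Pth ℓ U v} (h : baseL (e0 p) ∨ baseL (e1 p)) : pthL p := by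
  cases p <;> simp_all [e0, e1, baseL, pthL]

lemma endpoint_R {p : Pth ℓ U v} (h : baseR (e0 p) ∨ baseR (e1 p)) : pthR p := by
  cases p <;> simp_all [e0, e1, baseR, pthR]

lemma pthL_not_pthR {p : Pth ℓ U v} (h : pthL p) : ¬ pthR p := by
  cases p <;> simp_all [pthL, pthR]

lemma pos_isL {p : Pth ℓ U v} {i : ℕ} {z : Vert (Base ℓ U) (Pth ℓ U v) (len a)}
    (h : pos e0 e1 (len a) p i z) (hz : isL z) : pthL p := by
  rcases h with ⟨_, rfl⟩ | ⟨_, rfl⟩ | ⟨_, _, _, rfl⟩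
  · exact endpoint_L (Or.inl hz)
  · exact endpoint_L (Or.inr hz)
  · exact hz

lemma pos_isR {p : Pth ℓ U v} {i : ℕ} {z : Vert (Base ℓ U) (Pth ℓ U v) (len a)}
    (h : pos e0 e1 (len a) p i z) (hz : isR z) : pthR p := by
  rcases h with ⟨_, rfl⟩ | ⟨_, rfl⟩ | ⟨_, _, _, rfl⟩
  · exact endpoint_R (Or.inl hz)
  · exact endpoint_R (Or.inr hz)
  · exact hz

lemma adj_not_LR {x y : Vert (Base ℓ U) (Pth ℓ U v) (len a)}
    (hxy : (H a ℓ U v).Adj x y) (hx : isL x) (hy : isR y) : False := by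
  obtain ⟨_, p, i, _, h⟩ := hxy
  rcases h with ⟨h1, h2⟩ | ⟨h1, h2⟩
  · exact pthL_not_pthR (pos_isL h1 hx) (pos_isR h2 hy)
  · exact pthL_not_pthR (pos_isL h2 hx) (pos_isR h1 hy)

lemma edist_s_le_walk {y z : Vert (Base ℓ U) (Pth ℓ U v) (len a)}
    (w : (H a ℓ U v).Walk y z) : ¬ isR y → isR z →
    (H a ℓ U v).edist (Sum.inl Base.s) z ≤ w.length := by
  induction w with
  | nil => intro h1 h2; exact absurd h2 h1
  | @cons y y' z hadj w' ih =>
    intro h1 h2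
    rcases tri y with hs | hL | hR
    · subst hs
      exact_mod_cast SimpleGraph.edist_le (SimpleGraph.Walk.cons hadj w')
    · have hy' : ¬ isR y' := fun hr => adj_not_LR hadj hL hr
      calc (H a ℓ U v).edist (Sum.inl Base.s) z ≤ w'.length := ih hy' h2
        _ ≤ ((SimpleGraph.Walk.cons hadj w').length : ℕ∞) := by
            rw [SimpleGraph.Walk.length_cons]; exact_mod_cast Nat.le_succ _
    · exact absurd hR h1

lemma edist_s_le {y z : Vert (Base ℓ U) (Pth ℓ U v) (len a)}
    (hy : ¬ isR y) (hz : isR z) :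
    (H a ℓ U v).edist (Sum.inl Base.s) z ≤ (H a ℓ U v).edist y z := by
  by_cases hr : (H a ℓ U v).Reachable y z
  · obtain ⟨w, hw⟩ := hr.exists_walk_length_eq_edist
    rw [← hw]
    exact edist_s_le_walk w hy hz
  · rw [SimpleGraph.edist_eq_top_of_not_reachable hr]; exact le_top

/-! ### Connectivity -/

/-- The vertex at position `i` along path `p`. -/
def vtx (p : Pth ℓ U v) (i : ℕ) : Vert (Base ℓ U) (Pth ℓ U v) (len a) :=
  if h : 0 < i ∧ i < len a p then Sum.inr ⟨p, ⟨i - 1, by omega⟩⟩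
  else if i = 0 then Sum.inl (e0 p) else Sum.inl (e1 p)

lemma len_pos (ha : 0 < a) (p : Pth ℓ U v) : 0 < len a p := by
  cases p <;> simp [len] <;> omega

lemma e0_ne_e1 (p : Pth ℓ U v) : (e0 p : Base ℓ U) ≠ e1 p := by
  cases p <;> simp [e0, e1]

lemma pos_vtx {p : Pth ℓ U v} {i : ℕ} (hi : i ≤ len a p) :
    pos e0 e1 (len a) p i (vtx p i : Vert (Base ℓ U) (Pth ℓ U v) (len a)) := by
  unfold vtx
  split_ifs with h1 h2
  · exact Or.inr (Or.inr ⟨by omega, h1.1, h1.2, rfl⟩)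
  · exact Or.inl ⟨h2, rfl⟩
  · exact Or.inr (Or.inl ⟨by omega, rfl⟩)

lemma vtx_zero (p : Pth ℓ U v) :
    (vtx p 0 : Vert (Base ℓ U) (Pth ℓ U v) (len a)) = Sum.inl (e0 p) := by
  simp [vtx]

lemma vtx_last (ha : 0 < a) (p : Pth ℓ U v) :
    (vtx p (len a p) : Vert (Base ℓ U) (Pth ℓ U v) (len a)) = Sum.inl (e1 p) := by
  have h := len_pos (a := a) (v := v) ha p
  unfold vtx
  split_ifs with h1 h2
  · exact absurd h1.2 (lt_irrefl _)
  · exact absurd h2 (by omega)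
  · rfl

lemma adj_vtx {p : Pth ℓ U v} {i : ℕ} (hi : i < len a p) :
    (H a ℓ U v).Adj (vtx p i) (vtx p (i + 1)) := by
  have hne : (vtx p i : Vert (Base ℓ U) (Pth ℓ U v) (len a)) ≠ vtx p (i + 1) := by
    by_cases hc2 : i + 1 < len a p
    · have e2 : (vtx p (i + 1) : Vert (Base ℓ U) (Pth ℓ U v) (len a))
          = Sum.inr ⟨p, ⟨i, by omega⟩⟩ := by
        unfold vtx
        rw [dif_pos ⟨Nat.succ_pos i, hc2⟩]
        exact congrArg (fun j : Fin (len a p - 1) =>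
          (Sum.inr ⟨p, j⟩ : Vert (Base ℓ U) (Pth ℓ U v) (len a))) (Fin.ext (by simp))
      rcases Nat.eq_zero_or_pos i with rfl | hip
      · rw [vtx_zero, e2]; simp
      · have e1' : (vtx p i : Vert (Base ℓ U) (Pth ℓ U v) (len a))
            = Sum.inr ⟨p, ⟨i - 1, by omega⟩⟩ := by
          unfold vtx; rw [dif_pos ⟨hip, hi⟩]
        rw [e1', e2]
        intro hEq
        simp at hEq
        omega
    · have e2 : (vtx p (i + 1) : Vert (Base ℓ U) (Pth ℓ U v) (len a)) = Sum.inl (e1 p) := by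
        unfold vtx; rw [dif_neg (by omega), if_neg (by omega)]
      rcases Nat.eq_zero_or_pos i with rfl | hip
      · rw [vtx_zero, e2]
        exact fun h => e0_ne_e1 p (Sum.inl.inj h)
      · have e1' : (vtx p i : Vert (Base ℓ U) (Pth ℓ U v) (len a))
            = Sum.inr ⟨p, ⟨i - 1, by omega⟩⟩ := by
          unfold vtx; rw [dif_pos ⟨hip, hi⟩]
        rw [e1', e2]; simp
  exact ⟨hne, p, i, hi, Or.inl ⟨pos_vtx (le_of_lt hi), pos_vtx hi⟩⟩

lemma reach_vtx (ha : 0 < a) (p : Pth ℓ U v) :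
    ∀ i, i ≤ len a p → (H a ℓ U v).Reachable (Sum.inl (e0 p)) (vtx p i) := by
  intro i
  induction i with
  | zero => intro _; rw [vtx_zero]
  | succ n ih =>
    intro hn
    exact (ih (by omega)).trans (adj_vtx (by omega)).reachable

lemma reach_e0_e1 (ha : 0 < a) (p : Pth ℓ U v) :
    (H a ℓ U v).Reachable (Sum.inl (e0 p)) (Sum.inl (e1 p)) := by
  have h := reach_vtx ha p (len a p) le_rfl
  rwa [vtx_last ha] at h

lemma reach_base (ha : 0 < a) (hUone : ∀ u ∈ U, ∃ c, u c = true) (b : Base ℓ U) :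
    (H a ℓ U v).Reachable (Sum.inl Base.s) (Sum.inl b) := by
  have hcL : ∀ c, (H a ℓ U v).Reachable (Sum.inl Base.s) (Sum.inl (Base.cL c)) :=
    fun c => reach_e0_e1 ha (.scL c)
  have hcR : ∀ c, (H a ℓ U v).Reachable (Sum.inl Base.s) (Sum.inl (Base.cR c)) :=
    fun c => reach_e0_e1 ha (.scR c)
  have huLa : ∀ u : U, (H a ℓ U v).Reachable (Sum.inl Base.s) (Sum.inl (Base.uLa u)) := by
    intro u
    obtain ⟨c, hc⟩ := hUone u u.2
    exact (hcL c).trans (reach_e0_e1 ha (.ucL u c hc)).symm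
  have huRa : ∀ u : U, (H a ℓ U v).Reachable (Sum.inl Base.s) (Sum.inl (Base.uRa u)) := by
    intro u
    obtain ⟨c, hc⟩ := hUone u u.2
    exact (hcR c).trans (reach_e0_e1 ha (.ucR u c hc)).symm
  cases b with
  | s => exact SimpleGraph.Reachable.refl _
  | cL c => exact hcL c
  | cR c => exact hcR c
  | uLa u => exact huLa u
  | uRa u => exact huRa u
  | uL0 u => exact (huLa u).trans (reach_e0_e1 ha (.uLpath u)).symm
  | uR0 u => exact (huRa u).trans (reach_e0_e1 ha (.uRpath u)).symm

lemma reach_all (ha : 0 < a) (hUone : ∀ u ∈ U, ∃ c, u c = true)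
    (z : Vert (Base ℓ U) (Pth ℓ U v) (len a)) :
    (H a ℓ U v).Reachable (Sum.inl Base.s) z := by
  cases z with
  | inl b => exact reach_base ha hUone b
  | inr pi =>
    obtain ⟨p, i⟩ := pi
    have hi := i.isLt
    have h1 : (vtx p (i.val + 1) : Vert (Base ℓ U) (Pth ℓ U v) (len a)) = Sum.inr ⟨p, i⟩ := by
      unfold vtx
      rw [dif_pos ⟨Nat.succ_pos _, by omega⟩]
      exact congrArg (fun j : Fin (len a p - 1) =>
        (Sum.inr ⟨p, j⟩ : Vert (Base ℓ U) (Pth ℓ U v) (len a))) (Fin.ext (by simp))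
    have h2 := reach_vtx ha p (i.val + 1) (by omega)
    rw [h1] at h2
    exact (reach_base ha hUone (e0 p)).trans h2

end OVConstr

open OVConstr in
theorem two_ov_graph_s_is_center
    (a ℓ : ℕ) (ha : 0 < a) (hℓ : 0 < ℓ)
    (U : Set (Fin ℓ → Bool)) (hUfin : U.Finite) (hU : U.Nonempty)
    (hUone : ∀ u ∈ U, ∃ c, u c = true) (v : Fin ℓ → Bool)
 :
    (H a ℓ U v).Connected ∧
      ∀ y : Vert (Base ℓ U) (Pth ℓ U v) (len a),
        ecc a ℓ U v (Sum.inl Base.s) ≤ ecc a ℓ U v y := by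
  constructor
  · have : Nonempty (Vert (Base ℓ U) (Pth ℓ U v) (len a)) := ⟨Sum.inl Base.s⟩
    exact SimpleGraph.Connected.mk
      (fun x y => (reach_all ha hUone x).symm.trans (reach_all ha hUone y))
  · have key : ∀ y, ¬ isR y → ecc a ℓ U v (Sum.inl Base.s) ≤ ecc a ℓ U v y := by
      intro y hy
      simp only [ecc]
      apply iSup_le
      intro z
      rcases tri z with hs | hL | hR
      · subst hs
        simp
      · have h1 : (H a ℓ U v).edist (Sum.inl Base.s) z
            = (H a ℓ U v).edist (Sum.inl Base.s) (mV z) :=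
          (edist_mV (Sum.inl Base.s) z).symm
        rw [h1]
        exact le_trans (edist_s_le hy (isR_mV hL))
          (le_iSup (fun w => (H a ℓ U v).edist y w) (mV z))
      · exact le_trans (edist_s_le hy hR) (le_iSup (fun w => (H a ℓ U v).edist y w) z)
    intro y
    rcases tri y with hs | hL | hR
    · subst hs; exact le_rfl
    · exact key y (isL_not_isR hL)
    · have h := key (mV y) (isL_not_isR (isL_mV hR))
      rwa [ecc_mV] at h
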